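/- arXiv:1612.04400 — 2 statements merged into one kernel-verified Lean document; each statement's English description precedes it below -/
import Mathlib

section
/- Let γ>1, κ=(γ−1)/γ, c²(p)=γp^κ. Let V be an open subset of {(θ,r): r>0} and p:V→ℝ a C² function with p>0 and c²(p)<r² on V, satisfying the equation p_θθ − λ²·p_rr = −(r/c²(p))(c²(p)−2r²)·p_r − (κ·r⁴/(c²(p)·p))·p_r², where λ = r√((r²−c²(p))/c²(p)). Then the functions R := p_θ + λ·p_r and S := p_θ − λ·p_r satisfy the characteristic decomposition R_θ − λ·R_r = 𝔥·(S−R)·R and S_θ + λ·S_r = 𝔥·(R−S)·S on V, where 𝔥 = r²·(c²)'(p)/(4c²(p)(r²−c²(p))) and (c²)'(p)=(γ−1)p^{κ−1}. -/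
open Real

lemma hasDerivAt_line1 {f : ℝ × ℝ → ℝ} {L : ℝ × ℝ →L[ℝ] ℝ} {q : ℝ × ℝ}
    (h : HasFDerivAt f L q) : HasDerivAt (fun t => f (t, q.2)) (L (1, 0)) q.1 := by
  have hline : HasDerivAt (fun t : ℝ => ((t, q.2) : ℝ × ℝ)) ((1 : ℝ), (0 : ℝ)) q.1 :=
    (hasDerivAt_id q.1).prodMk (hasDerivAt_const q.1 q.2)
  exact h.comp_hasDerivAt q.1 hline

lemma hasDerivAt_line2 {f : ℝ × ℝ → ℝ} {L : ℝ × ℝ →L[ℝ] ℝ} {q : ℝ × ℝ}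
    (h : HasFDerivAt f L q) : HasDerivAt (fun s => f (q.1, s)) (L (0, 1)) q.2 := by
  have hline : HasDerivAt (fun s : ℝ => ((q.1, s) : ℝ × ℝ)) ((0 : ℝ), (1 : ℝ)) q.2 :=
    (hasDerivAt_const q.2 q.1).prodMk (hasDerivAt_id q.2)
  exact h.comp_hasDerivAt q.2 hline

set_option maxHeartbeats 1000000 in
lemma alg_key (r s c2 p0 κ Pθ Pr A11 A22 M H Λθ Λr : ℝ)
    (hr : 0 < r) (hs : 0 < s) (hc2 : 0 < c2) (hp0 : 0 < p0)
    (hrel : c2 * s ^ 2 = r ^ 2 - c2)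
    (hH : H = κ * r ^ 2 / (4 * p0 * (r ^ 2 - c2)))
    (hΛθ : Λθ = -(κ * r ^ 3 * Pθ) / (2 * p0 * c2 * s))
    (hΛr : Λr = s + r ^ 2 / (c2 * s) - κ * r ^ 3 * Pr / (2 * p0 * c2 * s))
    (hpde : A11 - (r * s) ^ 2 * A22 =
      -(r / c2) * (c2 - 2 * r ^ 2) * Pr - κ * r ^ 4 / (c2 * p0) * Pr ^ 2) :
    ((A11 + (Λθ * Pr + r * s * M)) - r * s * (M + (Λr * Pr + r * s * A22))
        = H * ((Pθ - r * s * Pr) - (Pθ + r * s * Pr)) * (Pθ + r * s * Pr)) ∧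
    ((A11 - (Λθ * Pr + r * s * M)) + r * s * (M - (Λr * Pr + r * s * A22))
        = H * ((Pθ + r * s * Pr) - (Pθ - r * s * Pr)) * (Pθ - r * s * Pr)) := by
  subst hH hΛθ hΛr
  have hA11 : A11 = (r * s) ^ 2 * A22 +
      (-(r / c2) * (c2 - 2 * r ^ 2) * Pr - κ * r ^ 4 / (c2 * p0) * Pr ^ 2) := by
    linarith
  subst hA11
  have hr0 : r ≠ 0 := hr.ne'
  have hs0 : s ≠ 0 := hs.ne'
  have hp00 : p0 ≠ 0 := hp0.ne'
  have hs1 : (0:ℝ) < s ^ 2 + 1 := by positivity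
  have hs10 : s ^ 2 + 1 ≠ 0 := hs1.ne'
  have hc2e : c2 = r ^ 2 / (s ^ 2 + 1) := by
    field_simp
    nlinarith [hrel]
  subst hc2e
  constructor <;>
    (field_simp; ring_nf)
/- STATEMENT 2: the characteristic decomposition of the polar second-order
equation.  Coordinates: q = (θ, r), i.e. q.1 = θ, q.2 = r. -/

/-- Partial derivative in the first (θ) variable. -/
noncomputable def pdTheta (f : ℝ × ℝ → ℝ) (q : ℝ × ℝ) : ℝ :=
  deriv (fun t => f (t, q.2)) q.1

/-- Partial derivative in the second (r) variable. -/
noncomputable def pdR (f : ℝ × ℝ → ℝ) (q : ℝ × ℝ) : ℝ :=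
  deriv (fun t => f (q.1, t)) q.2

/-- The characteristic speed λ = r √((r² − c²(p))/c²(p)), with c²(p) = γ p^κ. -/
noncomputable def lam (γ κ : ℝ) (p : ℝ × ℝ → ℝ) (q : ℝ × ℝ) : ℝ :=
  q.2 * Real.sqrt ((q.2 ^ 2 - γ * p q ^ κ) / (γ * p q ^ κ))

/-- R = ∂₊p = p_θ + λ p_r. -/
noncomputable def Rplus (γ κ : ℝ) (p : ℝ × ℝ → ℝ) (q : ℝ × ℝ) : ℝ :=
  pdTheta p q + lam γ κ p q * pdR p q

/-- S = ∂₋p = p_θ − λ p_r. -/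
noncomputable def Sminus (γ κ : ℝ) (p : ℝ × ℝ → ℝ) (q : ℝ × ℝ) : ℝ :=
  pdTheta p q - lam γ κ p q * pdR p q

/-- 𝔥 = r² (c²)'(p) / (4 c²(p) (r² − c²(p))), with (c²)'(p) = (γ−1) p^{κ−1}. -/
noncomputable def hfrak (γ κ : ℝ) (p : ℝ × ℝ → ℝ) (q : ℝ × ℝ) : ℝ :=
  q.2 ^ 2 * ((γ - 1) * p q ^ (κ - 1)) / (4 * (γ * p q ^ κ) * (q.2 ^ 2 - γ * p q ^ κ))

theorem characteristic_decomposition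
    (γ κ : ℝ) (hγ : 1 < γ) (hκ : κ = (γ - 1) / γ)
    (V : Set (ℝ × ℝ)) (hV : IsOpen V) (hVr : V ⊆ {q : ℝ × ℝ | 0 < q.2})
    (p : ℝ × ℝ → ℝ) (hp : ContDiffOn ℝ 2 p V)
    (hppos : ∀ q ∈ V, 0 < p q)
    (hhyp : ∀ q ∈ V, γ * p q ^ κ < q.2 ^ 2)
    (heq : ∀ q ∈ V,
      pdTheta (pdTheta p) q - (lam γ κ p q) ^ 2 * pdR (pdR p) q =
        -(q.2 / (γ * p q ^ κ)) * (γ * p q ^ κ - 2 * q.2 ^ 2) * pdR p q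
          - (κ * q.2 ^ 4 / ((γ * p q ^ κ) * p q)) * (pdR p q) ^ 2) :
    ∀ q ∈ V,
      pdTheta (Rplus γ κ p) q - lam γ κ p q * pdR (Rplus γ κ p) q
        = hfrak γ κ p q * (Sminus γ κ p q - Rplus γ κ p q) * Rplus γ κ p q ∧
      pdTheta (Sminus γ κ p) q + lam γ κ p q * pdR (Sminus γ κ p) q
        = hfrak γ κ p q * (Rplus γ κ p q - Sminus γ κ p q) * Sminus γ κ p q := by
  intro q hq
  have hq2 : 0 < q.2 := hVr hq
  have hpq : 0 < p q := hppos q hq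
  have hmemV : V ∈ nhds q := hV.mem_nhds hq
  have hcd : ContDiffAt ℝ 2 p q := hp.contDiffAt hmemV
  have hfd1 : ContDiffAt ℝ 1 (fderiv ℝ p) q := hcd.fderiv_right (by norm_num)
  have hdf2 : DifferentiableAt ℝ (fderiv ℝ p) q := hfd1.differentiableAt one_ne_zero
  set c2 : ℝ := γ * p q ^ κ with hc2def
  have hpκpos : 0 < p q ^ κ := Real.rpow_pos_of_pos hpq κ
  have hc2pos : 0 < c2 := by rw [hc2def]; positivity
  have hc2lt : c2 < q.2 ^ 2 := hhyp q hq
  have hdiffpos : 0 < q.2 ^ 2 - c2 := by linarith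
  set sv : ℝ := Real.sqrt ((q.2 ^ 2 - c2) / c2) with hsdef
  have hmpos : 0 < (q.2 ^ 2 - c2) / c2 := div_pos hdiffpos hc2pos
  have hsv : 0 < sv := Real.sqrt_pos.mpr hmpos
  have hsv2 : sv ^ 2 = (q.2 ^ 2 - c2) / c2 := Real.sq_sqrt hmpos.le
  have hrel : c2 * sv ^ 2 = q.2 ^ 2 - c2 := by
    rw [hsv2]; field_simp
  have hlamq : lam γ κ p q = q.2 * sv := by rw [hsdef, hc2def]; rfl
  -- differentiability on V
  have hdiffV : ∀ q' ∈ V, HasFDerivAt p (fderiv ℝ p q') q' := fun q' hq' =>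
    ((hp.contDiffAt (hV.mem_nhds hq')).differentiableAt (by norm_num)).hasFDerivAt
  have hpdθV : ∀ q' ∈ V, pdTheta p q' = fderiv ℝ p q' (1, 0) := fun q' hq' =>
    (hasDerivAt_line1 (hdiffV q' hq')).deriv
  have hpdrV : ∀ q' ∈ V, pdR p q' = fderiv ℝ p q' (0, 1) := fun q' hq' =>
    (hasDerivAt_line2 (hdiffV q' hq')).deriv
  have hmemθ : ∀ᶠ t in nhds q.1, (t, q.2) ∈ V := by
    have hc : ContinuousAt (fun t : ℝ => ((t, q.2) : ℝ × ℝ)) q.1 :=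
      (continuous_id.prodMk continuous_const).continuousAt
    exact hc.preimage_mem_nhds hmemV
  have hmemr : ∀ᶠ s in nhds q.2, (q.1, s) ∈ V := by
    have hc : ContinuousAt (fun s : ℝ => ((q.1, s) : ℝ × ℝ)) q.2 :=
      (continuous_const.prodMk continuous_id).continuousAt
    exact hc.preimage_mem_nhds hmemV
  set A := fderiv ℝ (fderiv ℝ p) q with hAdef
  have hsymm : A (0, 1) (1, 0) = A (1, 0) (0, 1) := hcd.isSymmSndFDerivAt (by norm_num) _ _
  have hev : ∀ v : ℝ × ℝ, HasFDerivAt (fun q' => fderiv ℝ p q' v)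
      ((ContinuousLinearMap.apply ℝ ℝ v).comp A) q :=
    fun v => (ContinuousLinearMap.apply ℝ ℝ v).hasFDerivAt.comp q hdf2.hasFDerivAt
  have hθθ : HasDerivAt (fun t => pdTheta p (t, q.2)) (A (1, 0) (1, 0)) q.1 := by
    have h2 : HasDerivAt (fun t => fderiv ℝ p (t, q.2) (1, 0)) (A (1, 0) (1, 0)) q.1 :=
      hasDerivAt_line1 (hev (1, 0))
    refine h2.congr_of_eventuallyEq ?_
    filter_upwards [hmemθ] with t ht
    exact hpdθV _ ht
  have hθr : HasDerivAt (fun t => pdR p (t, q.2)) (A (1, 0) (0, 1)) q.1 := by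
    have h2 : HasDerivAt (fun t => fderiv ℝ p (t, q.2) (0, 1)) (A (1, 0) (0, 1)) q.1 :=
      hasDerivAt_line1 (hev (0, 1))
    refine h2.congr_of_eventuallyEq ?_
    filter_upwards [hmemθ] with t ht
    exact hpdrV _ ht
  have hrθ : HasDerivAt (fun s => pdTheta p (q.1, s)) (A (1, 0) (0, 1)) q.2 := by
    have h2 : HasDerivAt (fun s => fderiv ℝ p (q.1, s) (1, 0)) (A (0, 1) (1, 0)) q.2 :=
      hasDerivAt_line2 (hev (1, 0))
    rw [hsymm] at h2
    refine h2.congr_of_eventuallyEq ?_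
    filter_upwards [hmemr] with s hs
    exact hpdθV _ hs
  have hrr : HasDerivAt (fun s => pdR p (q.1, s)) (A (0, 1) (0, 1)) q.2 := by
    have h2 : HasDerivAt (fun s => fderiv ℝ p (q.1, s) (0, 1)) (A (0, 1) (0, 1)) q.2 :=
      hasDerivAt_line2 (hev (0, 1))
    refine h2.congr_of_eventuallyEq ?_
    filter_upwards [hmemr] with s hs
    exact hpdrV _ hs
  -- first derivatives of p along lines, with values pdTheta p q / pdR p q
  have hpfd : HasFDerivAt p (fderiv ℝ p q) q := hdiffV q hq
  have hpθ : HasDerivAt (fun t => p (t, q.2)) (pdTheta p q) q.1 := by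
    rw [hpdθV q hq]; exact hasDerivAt_line1 hpfd
  have hpr : HasDerivAt (fun s => p (q.1, s)) (pdR p q) q.2 := by
    rw [hpdrV q hq]; exact hasDerivAt_line2 hpfd
  -- derivative of λ along the θ-line
  have hc2ne : γ * p q ^ κ ≠ 0 := by rw [← hc2def]; exact hc2pos.ne'
  have hmne : (q.2 ^ 2 - γ * p q ^ κ) / (γ * p q ^ κ) ≠ 0 := by
    rw [← hc2def]; exact hmpos.ne'
  have hrpow1 : p q ^ (κ - 1) = p q ^ κ / p q := Real.rpow_sub_one hpq.ne' κ
  have hΛθ : HasDerivAt (fun t => lam γ κ p (t, q.2))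
      (-(κ * q.2 ^ 3 * pdTheta p q) / (2 * p q * c2 * sv)) q.1 := by
    have h1 : HasDerivAt (fun t => γ * p (t, q.2) ^ κ)
        (γ * (pdTheta p q * κ * p q ^ (κ - 1))) q.1 :=
      (hpθ.rpow_const (Or.inl hpq.ne')).const_mul γ
    have h2 := (HasDerivAt.const_sub (q.2 ^ 2) h1).div h1 hc2ne
    have h3 := (h2.sqrt hmne).const_mul q.2
    refine h3.congr_deriv ?_
    simp only [Pi.div_apply, Pi.sub_apply, id]
    rw [← hc2def, ← hsdef, hrpow1]
    field_simp
    ring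
  -- derivative of λ along the r-line
  have hΛr : HasDerivAt (fun s => lam γ κ p (q.1, s))
      (sv + q.2 ^ 2 / (c2 * sv) - κ * q.2 ^ 3 * pdR p q / (2 * p q * c2 * sv)) q.2 := by
    have h1 : HasDerivAt (fun s => γ * p (q.1, s) ^ κ)
        (γ * (pdR p q * κ * p q ^ (κ - 1))) q.2 :=
      (hpr.rpow_const (Or.inl hpq.ne')).const_mul γ
    have h0 : HasDerivAt (fun s : ℝ => s ^ 2) (2 * q.2) q.2 := by
      simpa using hasDerivAt_pow 2 q.2
    have h2 := (h0.sub h1).div h1 hc2ne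
    have h3 := (hasDerivAt_id q.2).mul (h2.sqrt hmne)
    refine h3.congr_deriv ?_
    simp only [Pi.div_apply, Pi.sub_apply, id]
    rw [← hc2def, ← hsdef, hrpow1]
    have hsvne : sv ≠ 0 := hsv.ne'
    rw [hsdef, hsv2, ← hsdef] at *
    field_simp
    ring
  -- assemble
  have hRθ : HasDerivAt (fun t => Rplus γ κ p (t, q.2))
      (A (1, 0) (1, 0) + (-(κ * q.2 ^ 3 * pdTheta p q) / (2 * p q * c2 * sv) * pdR p q
        + q.2 * sv * A (1, 0) (0, 1))) q.1 := hθθ.add (hΛθ.mul hθr)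
  have hRr : HasDerivAt (fun s => Rplus γ κ p (q.1, s))
      (A (1, 0) (0, 1) + ((sv + q.2 ^ 2 / (c2 * sv)
          - κ * q.2 ^ 3 * pdR p q / (2 * p q * c2 * sv)) * pdR p q
        + q.2 * sv * A (0, 1) (0, 1))) q.2 := hrθ.add (hΛr.mul hrr)
  have hSθ : HasDerivAt (fun t => Sminus γ κ p (t, q.2))
      (A (1, 0) (1, 0) - (-(κ * q.2 ^ 3 * pdTheta p q) / (2 * p q * c2 * sv) * pdR p q
        + q.2 * sv * A (1, 0) (0, 1))) q.1 := hθθ.sub (hΛθ.mul hθr)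
  have hSr : HasDerivAt (fun s => Sminus γ κ p (q.1, s))
      (A (1, 0) (0, 1) - ((sv + q.2 ^ 2 / (c2 * sv)
          - κ * q.2 ^ 3 * pdR p q / (2 * p q * c2 * sv)) * pdR p q
        + q.2 * sv * A (0, 1) (0, 1))) q.2 := hrθ.sub (hΛr.mul hrr)
  have e1 : pdTheta (Rplus γ κ p) q = A (1, 0) (1, 0)
      + (-(κ * q.2 ^ 3 * pdTheta p q) / (2 * p q * c2 * sv) * pdR p q
        + q.2 * sv * A (1, 0) (0, 1)) := hRθ.deriv
  have e2 : pdR (Rplus γ κ p) q = A (1, 0) (0, 1)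
      + ((sv + q.2 ^ 2 / (c2 * sv) - κ * q.2 ^ 3 * pdR p q / (2 * p q * c2 * sv)) * pdR p q
        + q.2 * sv * A (0, 1) (0, 1)) := hRr.deriv
  have e3 : pdTheta (Sminus γ κ p) q = A (1, 0) (1, 0)
      - (-(κ * q.2 ^ 3 * pdTheta p q) / (2 * p q * c2 * sv) * pdR p q
        + q.2 * sv * A (1, 0) (0, 1)) := hSθ.deriv
  have e4 : pdR (Sminus γ κ p) q = A (1, 0) (0, 1)
      - ((sv + q.2 ^ 2 / (c2 * sv) - κ * q.2 ^ 3 * pdR p q / (2 * p q * c2 * sv)) * pdR p q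
        + q.2 * sv * A (0, 1) (0, 1)) := hSr.deriv
  -- the PDE in the new variables
  have hpde := heq q hq
  have eA11 : pdTheta (pdTheta p) q = A (1, 0) (1, 0) := hθθ.deriv
  have eA22 : pdR (pdR p) q = A (0, 1) (0, 1) := hrr.deriv
  rw [eA11, eA22, hlamq, ← hc2def] at hpde
  -- the coefficient 𝔥
  have hγ0 : γ ≠ 0 := by linarith
  have hγκ : γ * κ = γ - 1 := by rw [hκ]; field_simp
  have hH : hfrak γ κ p q = κ * q.2 ^ 2 / (4 * p q * (q.2 ^ 2 - c2)) := by
    simp only [hfrak]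
    rw [← hc2def, hrpow1, ← hγκ]
    field_simp
    ring
  have key := alg_key q.2 sv c2 (p q) κ (pdTheta p q) (pdR p q)
      (A (1, 0) (1, 0)) (A (0, 1) (0, 1)) (A (1, 0) (0, 1)) (hfrak γ κ p q)
      (-(κ * q.2 ^ 3 * pdTheta p q) / (2 * p q * c2 * sv))
      (sv + q.2 ^ 2 / (c2 * sv) - κ * q.2 ^ 3 * pdR p q / (2 * p q * c2 * sv))
      hq2 hsv hc2pos hpq hrel hH rfl rfl hpde
  rw [e1, e2, e3, e4, hlamq]
  exact key
end

section
/- Let ξ>0, η>0 and c>0 satisfy 0<c²<ξ²+η² and ξ²≠c². Define Λ₋ = (ξη − √(c²(ξ²+η²−c²)))/(ξ²−c²) and Λ₊ = (ξη + √(c²(ξ²+η²−c²)))/(ξ²−c²). Then: (i) ξ·Λ₋ − η < 0; (ii) η·Λ₋ + ξ > 0; (iii) Λ₊ ≠ 0, and η·Λ₊^{−1} − ξ < 0; (iv) ξ·Λ₊^{−1} + η > 0. -/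
open Real

/- STATEMENT 6: sign properties of the Cartesian characteristic slopes
Λ± = (ξη ± √(c²(ξ²+η²−c²)))/(ξ²−c²). -/

/-- The negative Cartesian characteristic slope Λ₋. -/
noncomputable def LamNeg (ξ η c : ℝ) : ℝ :=
  (ξ * η - Real.sqrt (c ^ 2 * (ξ ^ 2 + η ^ 2 - c ^ 2))) / (ξ ^ 2 - c ^ 2)

/-- The positive Cartesian characteristic slope Λ₊. -/
noncomputable def LamPos (ξ η c : ℝ) : ℝ :=
  (ξ * η + Real.sqrt (c ^ 2 * (ξ ^ 2 + η ^ 2 - c ^ 2))) / (ξ ^ 2 - c ^ 2)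

theorem slope_sign_properties
    (ξ η c : ℝ) (hξ : 0 < ξ) (hη : 0 < η) (hc : 0 < c)
    (hlt : c ^ 2 < ξ ^ 2 + η ^ 2) (hne : ξ ^ 2 ≠ c ^ 2) :
    -- (i)
    ξ * LamNeg ξ η c - η < 0 ∧
    -- (ii)
    η * LamNeg ξ η c + ξ > 0 ∧
    -- (iii)
    (LamPos ξ η c ≠ 0 ∧ η * (LamPos ξ η c)⁻¹ - ξ < 0) ∧
    -- (iv)
    ξ * (LamPos ξ η c)⁻¹ + η > 0 := by
  have hK : 0 < ξ ^ 2 + η ^ 2 - c ^ 2 := by linarith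
  set s := Real.sqrt (c ^ 2 * (ξ ^ 2 + η ^ 2 - c ^ 2)) with hs
  have hs2 : s ^ 2 = c ^ 2 * (ξ ^ 2 + η ^ 2 - c ^ 2) := by
    rw [hs, sq_sqrt]; positivity
  have hs0 : 0 < s := by rw [hs]; apply Real.sqrt_pos.mpr; positivity
  have hA : ξ ^ 2 - c ^ 2 ≠ 0 := sub_ne_zero.mpr hne
  have hden : 0 < ξ * η + s := by nlinarith
  have hsum : (0:ℝ) < ξ ^ 2 + η ^ 2 := by positivity
  have hinv : (LamPos ξ η c)⁻¹ = (ξ ^ 2 - c ^ 2) / (ξ * η + s) := by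
    rw [LamPos, ← hs, inv_div]
  have h1 : ξ * LamNeg ξ η c - η = (η * c ^ 2 - ξ * s) / (ξ ^ 2 - c ^ 2) := by
    rw [LamNeg, ← hs]; field_simp; ring
  have h2 : η * LamNeg ξ η c + ξ =
      (ξ * (ξ ^ 2 + η ^ 2 - c ^ 2) - η * s) / (ξ ^ 2 - c ^ 2) := by
    rw [LamNeg, ← hs]; field_simp; ring
  have h3 : η * (LamPos ξ η c)⁻¹ - ξ = (-(η * c ^ 2) - ξ * s) / (ξ * η + s) := by
    rw [hinv]; field_simp; ring
  have h4 : ξ * (LamPos ξ η c)⁻¹ + η =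
      (ξ * (ξ ^ 2 + η ^ 2 - c ^ 2) + η * s) / (ξ * η + s) := by
    rw [hinv]; field_simp; ring
  refine ⟨?_, ?_, ⟨?_, ?_⟩, ?_⟩
  · rw [h1]
    rcases hne.lt_or_gt with h | h
    · apply div_neg_of_pos_of_neg
      · have hsq : (ξ * s) ^ 2 < (η * c ^ 2) ^ 2 := by
          nlinarith [hs2, mul_pos (mul_pos (pow_pos hc 2) (sub_pos.mpr h)) hsum,
            sq_nonneg ξ, sq_nonneg η]
        have := lt_of_pow_lt_pow_left₀ 2 (by positivity : (0:ℝ) ≤ η * c ^ 2) hsq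
        linarith
      · linarith
    · apply div_neg_of_neg_of_pos
      · have hsq : (η * c ^ 2) ^ 2 < (ξ * s) ^ 2 := by
          nlinarith [hs2, mul_pos (mul_pos (pow_pos hc 2) (sub_pos.mpr h)) hsum,
            sq_nonneg ξ, sq_nonneg η]
        have := lt_of_pow_lt_pow_left₀ 2 (mul_pos hξ hs0).le hsq
        linarith
      · linarith
  · rw [h2]
    rcases hne.lt_or_gt with h | h
    · apply div_pos_of_neg_of_neg
      · have hsq : (ξ * (ξ ^ 2 + η ^ 2 - c ^ 2)) ^ 2 < (η * s) ^ 2 := by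
          nlinarith [hs2, mul_pos (mul_pos hK (sub_pos.mpr h)) hsum,
            sq_nonneg ξ, sq_nonneg η]
        have := lt_of_pow_lt_pow_left₀ 2 (mul_pos hη hs0).le hsq
        linarith
      · linarith
    · apply div_pos
      · have hsq : (η * s) ^ 2 < (ξ * (ξ ^ 2 + η ^ 2 - c ^ 2)) ^ 2 := by
          nlinarith [hs2, mul_pos (mul_pos hK (sub_pos.mpr h)) hsum,
            sq_nonneg ξ, sq_nonneg η]
        have := lt_of_pow_lt_pow_left₀ 2 (mul_pos hξ hK).le hsq
        linarith
      · linarith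
  · rw [LamPos, ← hs]
    exact div_ne_zero (by positivity) hA
  · rw [h3]
    apply div_neg_of_neg_of_pos
    · nlinarith [mul_pos hξ hs0]
    · exact hden
  · rw [h4]
    apply div_pos
    · nlinarith [mul_pos hη hs0]
    · exact hden
end
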